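/- Suppose Q is absolutely continuous with respect to P on ℋ_A = ℋ ∨ σ({A₁}) and that there exists an ℋ-measurable density h ≥ 0 of Q|ℋ_A with respect to P|ℋ_A (i.e. Q[M] = E_P[h·1_M] for all M ∈ ℋ_A). Then P and Q are related by covariate shift with respect to ℋ: any version Ψ of P[A₁ | ℋ] satisfies Q[A₁ ∩ H] = E_Q[Ψ·1_H] for all H ∈ ℋ. -/

import Mathlib

open MeasureTheory Set

/-- `Ψ` is an `m`-measurable version of the conditional probability of `A` given `m` under `P`
(a measure on the ambient σ-algebra `mΩ`): for every `m`-measurable `H`,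
`P (A ∩ H) = ∫_H Ψ dP`. -/
def IsCondVersion {Ω : Type*} [mΩ : MeasurableSpace Ω] (m : MeasurableSpace Ω)
    (P : @Measure Ω mΩ) (A : Set Ω) (Ψ : Ω → ℝ) : Prop :=
  Measurable[m] Ψ ∧
  ∀ H : Set Ω, MeasurableSet[m] H → (P (A ∩ H)).toReal = ∫ ω in H, Ψ ω ∂P

/-- `P` and `Q` are related by covariate shift w.r.t. the sub-σ-algebra `m`: there is a common
`m`-measurable `[0,1]`-valued version `Ψ` of the conditional probability of `A` given `m`. -/
def CovShift {Ω : Type*} [mΩ : MeasurableSpace Ω] (m : MeasurableSpace Ω)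
    (P Q : @Measure Ω mΩ) (A : Set Ω) : Prop :=
  ∃ Ψ : Ω → ℝ, (∀ ω, Ψ ω ∈ Set.Icc (0 : ℝ) 1) ∧
    @IsCondVersion Ω mΩ m P A Ψ ∧ @IsCondVersion Ω mΩ m Q A Ψ

/-- If `Q` has an `ℋ`-measurable density `h` w.r.t. `P` on `ℋ_A = ℋ ∨ σ({A₁})`, then `P` and
`Q` are related by covariate shift w.r.t. `ℋ`: any version `Ψ` of `P[A₁ | ℋ]` is also a
version of `Q[A₁ | ℋ]`. -/
theorem stmt6 {Ω : Type} [mΩ : MeasurableSpace Ω] {m : MeasurableSpace Ω} (hm : m ≤ mΩ)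
    (A₁ : Set Ω) (hA₁ : MeasurableSet[mΩ] A₁) (hA₁m : ¬ MeasurableSet[m] A₁)
    (P Q : @Measure Ω mΩ) (hP : @IsProbabilityMeasure Ω mΩ P)
    (hQ : @IsProbabilityMeasure Ω mΩ Q)
    (hpos : 0 < P A₁) (hlt : P A₁ < 1)
    (h : Ω → ℝ) (hmeas : Measurable[m] h) (hnonneg : ∀ ω, 0 ≤ h ω)
    (hdens : ∀ M : Set Ω, MeasurableSet[m ⊔ MeasurableSpace.generateFrom {A₁}] M →
      (Q M).toReal = ∫ ω in M, h ω ∂P)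
    (Ψ : Ω → ℝ) (hΨ : @IsCondVersion Ω mΩ m P A₁ Ψ) :
    @IsCondVersion Ω mΩ m Q A₁ Ψ := by
  obtain ⟨hΨmeas, hΨint⟩ := hΨ
  letI : MeasurableSpace Ω := mΩ
  have hmeas0 : Measurable[mΩ] h := hmeas.mono hm le_rfl
  have hΨmeas0 : Measurable[mΩ] Ψ := hΨmeas.mono hm le_rfl
  -- A₁ is measurable in the sup σ-algebra
  have hA₁sup : MeasurableSet[m ⊔ MeasurableSpace.generateFrom {A₁}] A₁ :=
    (le_sup_right : MeasurableSpace.generateFrom {A₁} ≤ _) _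
      (MeasurableSpace.measurableSet_generateFrom (Set.mem_singleton A₁))
  -- h is integrable
  have hint : Integrable h P := by
    by_contra hcon
    have h1 := hdens univ MeasurableSet.univ
    rw [Measure.restrict_univ, integral_undef hcon, hQ.measure_univ] at h1
    norm_num at h1
  -- Ψ is a.e. in [0, 1]
  have key0 : ∀ᵐ ω ∂P, 0 ≤ Ψ ω := by
    have hnull : ∀ n : ℕ, P {ω | Ψ ω < 0 ∧ ω ∈ Ψ ⁻¹' Icc (-(n + 1 : ℝ)) 0} = 0 := by
      intro n
      set u : Set Ω := Ψ ⁻¹' Icc (-(n + 1 : ℝ)) 0 with hu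
      have hu_m : MeasurableSet[m] u := hΨmeas measurableSet_Icc
      have hu0 : MeasurableSet[mΩ] u := hm _ hu_m
      have hIntOn : IntegrableOn Ψ u P := by
        refine Measure.integrableOn_of_bounded (measure_ne_top P u)
          hΨmeas0.aestronglyMeasurable (M := (n + 1 : ℝ)) ?_
        refine (ae_restrict_iff' hu0).2 (ae_of_all _ fun ω hω => ?_)
        rw [Real.norm_eq_abs, abs_le]
        exact ⟨hω.1, hω.2.trans (by positivity)⟩
      have h1 : ∫ ω in u, Ψ ω ∂P = 0 := by
        refine le_antisymm (setIntegral_nonpos hu0 fun ω hω => hω.2) ?_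
        rw [← hΨint u hu_m]
        exact ENNReal.toReal_nonneg
      have h2 : (-Ψ) =ᵐ[P.restrict u] 0 := by
        refine (integral_eq_zero_iff_of_nonneg_ae ?_ hIntOn.neg).1 ?_
        · refine (ae_restrict_iff' hu0).2 (ae_of_all _ fun ω hω => ?_)
          simp only [Pi.neg_apply, Pi.zero_apply, neg_nonneg]
          exact hω.2
        · simp only [Pi.neg_apply, integral_neg, h1, neg_zero]
      have h3 : ∀ᵐ ω ∂P, ω ∈ u → (-Ψ) ω = (0 : Ω → ℝ) ω := (ae_restrict_iff' hu0).1 h2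
      rw [ae_iff] at h3
      refine measure_mono_null (fun ω hω => ?_) h3
      simp only [mem_setOf_eq, Classical.not_imp, Pi.neg_apply, Pi.zero_apply]
      exact ⟨hω.2, fun hc => by linarith [hω.1, neg_eq_zero.1 hc]⟩
    have hsub : {ω | Ψ ω < 0} ⊆ ⋃ n : ℕ, {ω | Ψ ω < 0 ∧ ω ∈ Ψ ⁻¹' Icc (-(n + 1 : ℝ)) 0} := by
      intro ω hω
      obtain ⟨n, hn⟩ := exists_nat_ge (-Ψ ω)
      exact mem_iUnion.2 ⟨n, hω, ⟨by simp only [neg_le]; linarith, le_of_lt hω⟩⟩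
    have : P {ω | Ψ ω < 0} = 0 :=
      measure_mono_null hsub (measure_iUnion_null hnull)
    rw [ae_iff]
    simpa only [not_le] using this
  have key1 : ∀ᵐ ω ∂P, Ψ ω ≤ 1 := by
    have hnull : ∀ n : ℕ, P {ω | 1 < Ψ ω ∧ ω ∈ Ψ ⁻¹' Icc (1 : ℝ) (n + 1)} = 0 := by
      intro n
      set v : Set Ω := Ψ ⁻¹' Icc (1 : ℝ) (n + 1) with hv
      have hv_m : MeasurableSet[m] v := hΨmeas measurableSet_Icc
      have hv0 : MeasurableSet[mΩ] v := hm _ hv_m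
      have hIntOn : IntegrableOn Ψ v P := by
        refine Measure.integrableOn_of_bounded (measure_ne_top P v)
          hΨmeas0.aestronglyMeasurable (M := (n + 1 : ℝ)) ?_
        refine (ae_restrict_iff' hv0).2 (ae_of_all _ fun ω hω => ?_)
        rw [Real.norm_eq_abs, abs_le]
        exact ⟨by linarith [hω.1], hω.2⟩
      have hIntOne : IntegrableOn (fun _ => (1 : ℝ)) v P := integrableOn_const (measure_ne_top P v)
      have hle : ∫ ω in v, Ψ ω ∂P ≤ (P v).toReal := by
        rw [← hΨint v hv_m]
        exact ENNReal.toReal_mono (measure_ne_top P v) (measure_mono inter_subset_right)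
      have hone : ∫ _ in v, (1 : ℝ) ∂P = (P v).toReal := by
        rw [setIntegral_const, smul_eq_mul, mul_one, measureReal_def]
      have h1 : ∫ ω in v, (Ψ ω - 1) ∂P = 0 := by
        have hge : 0 ≤ ∫ ω in v, (Ψ ω - 1) ∂P :=
          setIntegral_nonneg hv0 fun ω hω => by linarith [hω.1]
        have hle2 : ∫ ω in v, (Ψ ω - 1) ∂P ≤ 0 := by
          rw [integral_sub hIntOn hIntOne, hone]
          linarith
        linarith
      have h2 : (Ψ - fun _ => (1 : ℝ)) =ᵐ[P.restrict v] 0 := by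
        refine (integral_eq_zero_iff_of_nonneg_ae ?_ (hIntOn.sub hIntOne)).1 ?_
        · refine (ae_restrict_iff' hv0).2 (ae_of_all _ fun ω hω => ?_)
          simp only [Pi.sub_apply, Pi.zero_apply, sub_nonneg]
          exact hω.1
        · simpa only [Pi.sub_apply] using h1
      have h3 : ∀ᵐ ω ∂P, ω ∈ v → ((Ψ - fun _ => (1 : ℝ)) : Ω → ℝ) ω = (0 : Ω → ℝ) ω :=
        (ae_restrict_iff' hv0).1 h2
      rw [ae_iff] at h3
      refine measure_mono_null (fun ω hω => ?_) h3
      simp only [mem_setOf_eq, Classical.not_imp, Pi.sub_apply, Pi.zero_apply]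
      exact ⟨hω.2, fun hc => by linarith [hω.1, sub_eq_zero.1 hc]⟩
    have hsub : {ω | 1 < Ψ ω} ⊆ ⋃ n : ℕ, {ω | 1 < Ψ ω ∧ ω ∈ Ψ ⁻¹' Icc (1 : ℝ) (n + 1)} := by
      intro ω hω
      obtain ⟨n, hn⟩ := exists_nat_ge (Ψ ω)
      exact mem_iUnion.2 ⟨n, hω, ⟨le_of_lt hω, by linarith⟩⟩
    have : P {ω | 1 < Ψ ω} = 0 :=
      measure_mono_null hsub (measure_iUnion_null hnull)
    rw [ae_iff]
    simpa only [not_le] using this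
  -- the truncated version of Ψ
  set Ψ' : Ω → ℝ := fun ω => max 0 (min (Ψ ω) 1) with hΨ'def
  have hΨ'm : Measurable[m] Ψ' := measurable_const.max (hΨmeas.min measurable_const)
  have hΨ'm0 : Measurable[mΩ] Ψ' := hΨ'm.mono hm le_rfl
  have hΨΨ' : Ψ =ᵐ[P] Ψ' := by
    filter_upwards [key0, key1] with ω h0 h1
    simp [hΨ'def, min_eq_left h1, max_eq_right h0]
  have hΨ'_int : Integrable Ψ' P := by
    refine (integrable_const (1 : ℝ)).mono' hΨ'm0.aestronglyMeasurable
      (ae_of_all _ fun ω => ?_)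
    rw [Real.norm_eq_abs, abs_le]
    constructor
    · exact le_trans (by norm_num) (le_max_left 0 _)
    · exact max_le (by norm_num) (min_le_right _ _)
  -- Q agrees on m with the withDensity measure
  set μ₂ : @Measure Ω mΩ := P.withDensity (fun ω => ((h ω).toNNReal : ENNReal)) with hμ₂
  have haveq : ∀ M : Set Ω, MeasurableSet[m] M → Q M = μ₂ M := by
    intro M hM
    have hM0 : MeasurableSet[mΩ] M := hm _ hM
    have hMA : MeasurableSet[m ⊔ MeasurableSpace.generateFrom {A₁}] M :=
      (le_sup_left : m ≤ _) _ hM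
    have h1 : (Q M).toReal = ∫ ω in M, h ω ∂P := hdens M hMA
    have h2 : ENNReal.ofReal (∫ ω in M, h ω ∂P) = ∫⁻ ω in M, ENNReal.ofReal (h ω) ∂P :=
      ofReal_integral_eq_lintegral_ofReal hint.integrableOn (ae_of_all _ hnonneg)
    have h3 : μ₂ M = ∫⁻ ω in M, ENNReal.ofReal (h ω) ∂P := by
      rw [hμ₂, withDensity_apply _ hM0]
      rfl
    rw [h3, ← h2, ← h1, ENNReal.ofReal_toReal (measure_ne_top Q M)]
  have htrim : Q.trim hm = μ₂.trim hm := by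
    refine @Measure.ext Ω m _ _ (fun s hs => ?_)
    rw [trim_measurableSet_eq hm hs, trim_measurableSet_eq hm hs, haveq s hs]
  -- transfer of integrals of m-measurable functions from Q to P
  have transfer : ∀ φ : Ω → ℝ, StronglyMeasurable[m] φ →
      ∫ ω, φ ω ∂Q = ∫ ω, h ω * φ ω ∂P := by
    intro φ hφ
    calc ∫ ω, φ ω ∂Q = ∫ ω, φ ω ∂(Q.trim hm) := integral_trim hm hφ
      _ = ∫ ω, φ ω ∂(μ₂.trim hm) := by rw [htrim]
      _ = ∫ ω, φ ω ∂μ₂ := (integral_trim hm hφ).symm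
      _ = ∫ ω, (h ω).toNNReal • φ ω ∂P :=
          integral_withDensity_eq_integral_smul (measurable_real_toNNReal.comp hmeas0) _
      _ = ∫ ω, h ω * φ ω ∂P := by
          refine integral_congr_ae (ae_of_all _ fun ω => ?_)
          simp [NNReal.smul_def, Real.coe_toNNReal _ (hnonneg ω)]
  -- Ψ is a version of the conditional expectation of the indicator of A₁ under P
  have hfin : IsFiniteMeasure (P.trim hm) :=
    ⟨by rw [trim_measurableSet_eq hm MeasurableSet.univ]; exact measure_lt_top P univ⟩
  haveI := hfin
  set fA : Ω → ℝ := A₁.indicator (fun _ => (1 : ℝ)) with hfA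
  have hfA_int : Integrable fA P := (integrable_const (1 : ℝ)).indicator hA₁
  have hsetint : ∀ s : Set Ω, MeasurableSet[m] s →
      ∫ x in s, fA x ∂P = ∫ x in s, Ψ' x ∂P := by
    intro s hs
    have e1 : ∫ x in s, fA x ∂P = ((P.restrict s) A₁).toReal := integral_indicator_one hA₁
    have e2 : ∫ x in s, Ψ x ∂P = ∫ x in s, Ψ' x ∂P :=
      integral_congr_ae (ae_restrict_of_ae hΨΨ')
    rw [e1, Measure.restrict_apply hA₁, hΨint s hs, e2]
  have hΨ'ae : Ψ' =ᵐ[P] P[fA|m] :=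
    ae_eq_condExp_of_forall_setIntegral_eq hm hfA_int
      (fun s hs _ => hΨ'_int.integrableOn) (fun s hs _ => (hsetint s hs).symm)
      hΨ'm.stronglyMeasurable.aestronglyMeasurable
  have hΨae : Ψ =ᵐ[P] P[fA|m] := hΨΨ'.trans hΨ'ae
  -- main computation
  refine ⟨hΨmeas, fun H hH => ?_⟩
  have hH0 : MeasurableSet[mΩ] H := hm _ hH
  set g : Ω → ℝ := H.indicator h with hg
  have hg_sm : StronglyMeasurable[m] g :=
    (hmeas.stronglyMeasurable).indicator hH
  have hg_int : Integrable g P := hint.indicator hH0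
  have hprod : g * fA = (A₁ ∩ H).indicator h := by
    funext ω
    by_cases h1 : ω ∈ A₁ <;> by_cases h2 : ω ∈ H <;>
      simp [hg, hfA, Set.indicator_apply, h1, h2]
  have hgfA_int : Integrable (g * fA) P := by
    rw [hprod]; exact hint.indicator (hA₁.inter hH0)
  -- LHS
  have hA₁H : MeasurableSet[m ⊔ MeasurableSpace.generateFrom {A₁}] (A₁ ∩ H) :=
    hA₁sup.inter ((le_sup_left : m ≤ _) _ hH)
  have lhs1 : (Q (A₁ ∩ H)).toReal = ∫ ω, (g * fA) ω ∂P := by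
    rw [hdens _ hA₁H, hprod, ← integral_indicator (hA₁.inter hH0)]
  -- condexp step
  have hce : P[g * fA|m] =ᵐ[P] g * P[fA|m] :=
    condExp_mul_of_stronglyMeasurable_left hg_sm hgfA_int hfA_int
  have step1 : ∫ ω, (g * fA) ω ∂P = ∫ ω, g ω * (P[fA|m]) ω ∂P :=
    calc ∫ ω, (g * fA) ω ∂P = ∫ ω, (P[g * fA|m]) ω ∂P := (integral_condExp hm).symm
      _ = ∫ ω, (g * P[fA|m]) ω ∂P := integral_congr_ae hce
      _ = ∫ ω, g ω * (P[fA|m]) ω ∂P := rfl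
  have step2 : ∫ ω, g ω * (P[fA|m]) ω ∂P = ∫ ω, g ω * Ψ ω ∂P := by
    refine integral_congr_ae ?_
    filter_upwards [hΨae] with ω hω
    rw [hω]
  -- RHS
  have rhs1 : ∫ ω in H, Ψ ω ∂Q = ∫ ω, H.indicator Ψ ω ∂Q :=
    (integral_indicator hH0).symm
  have rhs2 : ∫ ω, H.indicator Ψ ω ∂Q = ∫ ω, h ω * H.indicator Ψ ω ∂P :=
    transfer _ (hΨmeas.stronglyMeasurable.indicator hH)
  have rhs3 : ∀ ω, h ω * H.indicator Ψ ω = g ω * Ψ ω := by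
    intro ω
    by_cases h2 : ω ∈ H <;> simp [hg, Set.indicator_apply, h2]
  rw [lhs1, step1, step2, rhs1, rhs2]
  exact integral_congr_ae (ae_of_all _ fun ω => (rhs3 ω).symm)
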